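/- Let A, B be closed subspaces of a Hilbert space H with orthogonal projections P_A, P_B. For every n ≥ 1, ‖(P_A P_B)ⁿ − P_{A∩B}‖ = ‖P_A P_B − P_{A∩B}‖^{2n−1}. In particular, writing c = c(A,B) = ‖P_A P_B − P_{A∩B}‖, for every x ∈ H, ‖(P_A P_B)ⁿ x − P_{A∩B} x‖ ≤ c^{2n−1} ‖x‖. -/

import Mathlib

noncomputable def proj {E : Type*} [NormedAddCommGroup E] [InnerProductSpace ℝ E]
    (K : Submodule ℝ E) [CompleteSpace K] : E →L[ℝ] E :=
  K.subtypeL.comp (K.orthogonalProjectionOnto)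

lemma sa_norm_pow {E : Type*} [NormedAddCommGroup E] [InnerProductSpace ℝ E] [CompleteSpace E]
    {T : E →L[ℝ] E} (hT : IsSelfAdjoint T) {n : ℕ} (hn : 1 ≤ n) : ‖T ^ n‖ = ‖T‖ ^ n := by
  rcases eq_or_ne ‖T‖ 0 with h0 | h0
  · have : T = 0 := norm_eq_zero.mp h0
    simp [this, zero_pow (by omega : n ≠ 0), h0]
  · have hpos : 0 < ‖T‖ := lt_of_le_of_ne (norm_nonneg _) (Ne.symm h0)
    refine le_antisymm (norm_pow_le' T (by omega)) ?_
    obtain ⟨k, hk⟩ : ∃ k, n < 2 ^ k := ⟨n, Nat.lt_two_pow_self⟩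
    have h2 : ‖T ^ 2 ^ k‖ = ‖T‖ ^ 2 ^ k := by
      have := @IsSelfAdjoint.nnnorm_pow_two_pow (E →L[ℝ] E) _ _ _ _ hT k
      exact congrArg NNReal.toReal this |>.trans (by push_cast; ring) |>.trans rfl
    have hsplit : T ^ 2 ^ k = T ^ n * T ^ (2 ^ k - n) := by
      rw [← pow_add]; congr 1; omega
    have hle : ‖T‖ ^ 2 ^ k ≤ ‖T ^ n‖ * ‖T‖ ^ (2 ^ k - n) := by
      rw [← h2, hsplit]
      exact le_trans (norm_mul_le _ _)
        (mul_le_mul_of_nonneg_left (norm_pow_le' T (by omega)) (norm_nonneg _))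
    have hc : (0:ℝ) < ‖T‖ ^ (2 ^ k - n) := pow_pos hpos _
    have : ‖T‖ ^ n * ‖T‖ ^ (2 ^ k - n) ≤ ‖T ^ n‖ * ‖T‖ ^ (2 ^ k - n) := by
      rwa [← pow_add, (by omega : n + (2 ^ k - n) = 2 ^ k)]
    exact le_of_mul_le_mul_right this hc

section main
set_option linter.unusedSectionVars false
variable {E : Type*} [NormedAddCommGroup E] [InnerProductSpace ℝ E] [CompleteSpace E]

lemma proj_idem (A : Submodule ℝ E) [CompleteSpace A] : proj A * proj A = proj A := by
  ext x
  simp [proj, ContinuousLinearMap.mul_apply, Submodule.orthogonalProjectionOnto_mem_subspace_eq_self,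
    Submodule.starProjection_eq_self_iff, Submodule.starProjection_apply_mem]

lemma proj_sa (A : Submodule ℝ E) [CompleteSpace A] : IsSelfAdjoint (proj A) :=
  isSelfAdjoint_starProjection A

lemma proj_comp_of_le {A M : Submodule ℝ E} [CompleteSpace A] [CompleteSpace M]
    (h : M ≤ A) : proj A * proj M = proj M := by
  ext x
  have hm : (proj M) x ∈ A := h (by simp [proj])
  simp only [proj, ContinuousLinearMap.mul_apply, ContinuousLinearMap.coe_comp',
    Function.comp_apply, Submodule.subtypeL_apply]
  exact (Submodule.starProjection_eq_self_iff (K := A)).mpr hm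

lemma comp_proj_of_le {A M : Submodule ℝ E} [CompleteSpace A] [CompleteSpace M]
    (h : M ≤ A) : proj M * proj A = proj M := by
  have := congrArg star (proj_comp_of_le h)
  rwa [star_mul, (proj_sa A).star_eq, (proj_sa M).star_eq] at this
end main

theorem stmt3 {E : Type*} [NormedAddCommGroup E] [InnerProductSpace ℝ E] [CompleteSpace E]
    (A B : Submodule ℝ E) [CompleteSpace A] [CompleteSpace B] [CompleteSpace ↥(A ⊓ B)]
    (n : ℕ) (hn : 1 ≤ n) :
    ‖(proj A ∘L proj B) ^ n - proj (A ⊓ B)‖ =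
        ‖proj A ∘L proj B - proj (A ⊓ B)‖ ^ (2 * n - 1) ∧
      ∀ x : E, ‖((proj A ∘L proj B) ^ n) x - proj (A ⊓ B) x‖ ≤
        ‖proj A ∘L proj B - proj (A ⊓ B)‖ ^ (2 * n - 1) * ‖x‖ := by
  set pa := proj A with hpa
  set pb := proj B with hpb
  set pm := proj (A ⊓ B) with hpm
  have hcomp : pa ∘L pb = pa * pb := rfl
  have ipa : pa * pa = pa := proj_idem A
  have ipb : pb * pb = pb := proj_idem B
  have ipm : pm * pm = pm := proj_idem (A ⊓ B)
  have hapm : pa * pm = pm := proj_comp_of_le inf_le_left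
  have hpma : pm * pa = pm := comp_proj_of_le inf_le_left
  have hbpm : pb * pm = pm := proj_comp_of_le inf_le_right
  have hpmb : pm * pb = pm := comp_proj_of_le inf_le_right
  set qa := pa - pm with hqa
  set qb := pb - pm with hqb
  have hqaq : qa * qa = qa := by
    rw [hqa, sub_mul, mul_sub, mul_sub, ipa, hapm, hpma, ipm]; abel
  have hqbq : qb * qb = qb := by
    rw [hqb, sub_mul, mul_sub, mul_sub, ipb, hbpm, hpmb, ipm]; abel
  have hsqa : star qa = qa := by
    rw [hqa, star_sub, (proj_sa A).star_eq, (proj_sa (A ⊓ B)).star_eq]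
  have hsqb : star qb = qb := by
    rw [hqb, star_sub, (proj_sa B).star_eq, (proj_sa (A ⊓ B)).star_eq]
  set s := qa * qb with hs
  have hS : s = pa * pb - pm := by
    rw [hs, hqa, hqb, sub_mul, mul_sub, mul_sub, hapm, hpmb, ipm]; abel
  -- powers: (pa*pb)^k - pm = s^k for k ≥ 1
  have hpmk : ∀ k : ℕ, pm * (pa * pb) ^ k = pm := by
    intro k
    induction k with
    | zero => simp
    | succ k ih => rw [pow_succ, ← mul_assoc, ih, ← mul_assoc, hpma, hpmb]
  have habpm : (pa * pb) * pm = pm := by rw [mul_assoc, hbpm, hapm]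
  have hSn : ∀ k : ℕ, 1 ≤ k → (pa * pb) ^ k - pm = s ^ k := by
    intro k hk
    induction k with
    | zero => omega
    | succ k ih =>
      rcases Nat.eq_or_lt_of_le hk with h1 | h1
      · simp [← h1, hS]
      · have hk1 : 1 ≤ k := by omega
        rw [pow_succ' s k, ← ih hk1, hS, mul_sub, sub_mul, sub_mul, habpm,
          hpmk, ipm, ← pow_succ']
        abel
  -- norm identity  ‖s^n‖ = ‖s‖^(2n-1)
  set r := qb * qa with hr
  have hstars : star s = r := by rw [hs, star_mul, hsqa, hsqb, hr]
  set t := qa * (qb * qa) with ht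
  have hstart : star t = t := by
    rw [ht, star_mul, star_mul, hsqa, hsqb, mul_assoc]
  have hrqa : r * qa = r := by rw [hr, mul_assoc, hqaq]
  have hqbr : qb * r = r := by rw [hr, ← mul_assoc, hqbq]
  have hrk_qa : ∀ k : ℕ, 1 ≤ k → r ^ k * qa = r ^ k := by
    intro k hk
    have : r ^ k = r ^ (k - 1) * r := by rw [← pow_succ]; congr 1; omega
    rw [this, mul_assoc, hrqa]
  have hqb_rk : ∀ k : ℕ, 1 ≤ k → qb * r ^ k = r ^ k := by
    intro k hk
    have : r ^ k = r * r ^ (k - 1) := by rw [← pow_succ']; congr 1; omega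
    rw [this, ← mul_assoc, hqbr]
  have htk : ∀ k : ℕ, 1 ≤ k → t ^ k = qa * r ^ k := by
    intro k hk
    induction k with
    | zero => omega
    | succ k ih =>
      rcases Nat.eq_or_lt_of_le hk with h1 | h1
      · simp [← h1, ht, hr]
      · have hk1 : 1 ≤ k := by omega
        have hta : t = qa * r := by rw [ht, hr]
        calc t ^ (k + 1) = qa * r ^ k * (qa * r) := by rw [pow_succ, ih hk1, hta]
          _ = qa * (r ^ k * qa) * r := by simp only [mul_assoc]
          _ = qa * r ^ k * r := by rw [hrk_qa k hk1, mul_assoc]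
          _ = qa * r ^ (k + 1) := by rw [mul_assoc, ← pow_succ]
  have hsk : ∀ k : ℕ, s ^ (k + 1) = qa * r ^ k * qb := by
    intro k
    induction k with
    | zero => simp [hs]
    | succ k ih =>
      rw [pow_succ', ih, hs]
      simp only [mul_assoc]
      rw [← mul_assoc qb qa, ← hr, ← mul_assoc r, ← pow_succ']
  have key : ∀ k : ℕ, 1 ≤ k → ‖s ^ k‖ = ‖s‖ ^ (2 * k - 1) := by
    intro k hk
    have hsr : s ^ k * r ^ k = t ^ (2 * k - 1) := by
      obtain ⟨m, rfl⟩ : ∃ m, k = m + 1 := ⟨k - 1, by omega⟩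
      have h21 : 2 * (m + 1) - 1 = m + (m + 1) := by omega
      rw [h21, hsk m, htk (m + (m + 1)) (by omega)]
      simp only [mul_assoc]
      rw [hqb_rk (m + 1) (by omega), ← pow_add]
    have h1 : ‖s ^ k‖ * ‖s ^ k‖ = ‖t‖ ^ (2 * k - 1) := by
      rw [← CStarRing.norm_self_mul_star (x := s ^ k), star_pow, hstars, hsr,
        sa_norm_pow hstart (by omega)]
    have hts : t = s * r := by
      rw [ht, hs, hr]
      simp only [mul_assoc]
      rw [← mul_assoc qb qb, hqbq]
    have h2 : ‖t‖ = ‖s‖ * ‖s‖ := by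
      rw [hts, ← hstars]
      exact CStarRing.norm_self_mul_star
    have h3 : ‖s ^ k‖ ^ 2 = (‖s‖ ^ (2 * k - 1)) ^ 2 := by
      rw [sq, h1, h2]; ring
    calc ‖s ^ k‖ = Real.sqrt (‖s ^ k‖ ^ 2) := (Real.sqrt_sq (norm_nonneg _)).symm
      _ = Real.sqrt ((‖s‖ ^ (2 * k - 1)) ^ 2) := by rw [h3]
      _ = ‖s‖ ^ (2 * k - 1) := Real.sqrt_sq (pow_nonneg (norm_nonneg _) _)
  constructor
  · rw [hcomp, hSn n hn, ← hS]
    exact key n hn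
  · intro x
    rw [hcomp, ← ContinuousLinearMap.sub_apply]
    calc ‖((pa * pb) ^ n - pm) x‖ ≤ ‖(pa * pb) ^ n - pm‖ * ‖x‖ :=
          ContinuousLinearMap.le_opNorm _ x
      _ = _ := by rw [hSn n hn, key n hn, ← hS]
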